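/- arXiv:1509.00752 — 3 statements merged into one kernel-verified Lean document; each statement's English description precedes it below -/
import Mathlib

section
/- If x, y, B are integers with B ≠ 0 and x³ + y³ = B, then max{|x|, |y|} ≤ 2·√|B|. -/
lemma cube_sum_key (x y : ℤ) (hs : x + y ≠ 0) :
    (max |x| |y|) ^ 2 ≤ 4 * |x ^ 3 + y ^ 3| := by
  have h1 : 1 ≤ |x + y| := Int.one_le_abs hs
  have h2 : (0:ℤ) ≤ 3 * (x - y) ^ 2 + (x + y) ^ 2 := by positivity
  have h4 : 4 * |x ^ 3 + y ^ 3| = |x + y| * (3 * (x - y) ^ 2 + (x + y) ^ 2) := by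
    rw [show (4:ℤ) * |x ^ 3 + y ^ 3| = |4 * (x ^ 3 + y ^ 3)| by
        rw [abs_mul]; norm_num,
      show 4 * (x ^ 3 + y ^ 3) = (x + y) * (3 * (x - y) ^ 2 + (x + y) ^ 2) by ring,
      abs_mul, abs_of_nonneg h2]
  have h5 : 3 * (x - y) ^ 2 + (x + y) ^ 2 ≤ 4 * |x ^ 3 + y ^ 3| := by
    rw [h4]; nlinarith
  rcases max_cases |x| |y| with ⟨hm, _⟩ | ⟨hm, _⟩ <;> rw [hm, sq_abs] <;> nlinarith

/-- If `x, y, B` are integers with `B ≠ 0` and `x³ + y³ = B`, then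
`max {|x|, |y|} ≤ 2·√|B|`. -/
theorem cube_sum_height_bound (x y B : ℤ) (hB : B ≠ 0) (h : x ^ 3 + y ^ 3 = B) :
    (max |x| |y| : ℝ) ≤ 2 * Real.sqrt |B| := by
  have hs : x + y ≠ 0 := by
    intro hxy
    apply hB
    rw [← h, show x = -y by linarith]; ring
  have key := cube_sum_key x y hs
  rw [h] at key
  have hM : (0:ℝ) ≤ (max |x| |y| : ℤ) := by positivity
  have key' : ((max |x| |y| : ℤ) : ℝ) ^ 2 ≤ 4 * |(B:ℝ)| := by
    push_cast
    exact_mod_cast (by exact_mod_cast key : ((max |x| |y| : ℤ) ^ 2 : ℝ) ≤ 4 * |(B:ℝ)|)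
  have : ((max |x| |y| : ℤ) : ℝ) ≤ Real.sqrt (4 * |(B:ℝ)|) := by
    rw [show ((max |x| |y| : ℤ) : ℝ) = Real.sqrt (((max |x| |y| : ℤ) : ℝ) ^ 2) by
      rw [Real.sqrt_sq hM]]
    exact Real.sqrt_le_sqrt key'
  calc (max |x| |y| : ℝ) = ((max |x| |y| : ℤ) : ℝ) := by push_cast; ring
    _ ≤ Real.sqrt (4 * |(B:ℝ)|) := this
    _ = 2 * Real.sqrt |B| := by
        rw [Real.sqrt_mul (by norm_num), show Real.sqrt 4 = 2 by
          rw [show (4:ℝ) = 2^2 by norm_num, Real.sqrt_sq (by norm_num)]]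
end

section
/- Let K be a number field, S a finite set of places containing the archimedean ones, and suppose O_{K,S} is a UFD. Let f = [F(x,y), G(x,y)] : ℙ¹ → ℙ¹ be given by coprime homogeneous polynomials F, G ∈ O_{K,S}[x,y] of degree d ≥ 1 with resultant R = Res(F,G) ≠ 0. If α = a/b with a, b ∈ O_{K,S} coprime and f(α) ∈ O_{K,S}, then G(a,b) divides R in O_{K,S}. -/
open MvPolynomial IsDedekindDomain NumberField

/-- The coefficient of `x^i y^(d-i)` in a binary form `F` of degree `d`. -/
noncomputable def binaryCoeff {R : Type*} [CommRing R] (d : ℕ)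
    (F : MvPolynomial (Fin 2) R) (i : ℕ) : R :=
  MvPolynomial.coeff (Finsupp.single 0 i + Finsupp.single 1 (d - i)) F

/-- The Sylvester matrix of two binary forms `F`, `G` of degree `d`. -/
noncomputable def sylvesterMatrix {R : Type*} [CommRing R] (d : ℕ)
    (F G : MvPolynomial (Fin 2) R) : Matrix (Fin (2 * d)) (Fin (2 * d)) R :=
  Matrix.of fun i j =>
    if (i : ℕ) < d then
      (if (i : ℕ) ≤ (j : ℕ) ∧ (j : ℕ) ≤ (i : ℕ) + d then
        binaryCoeff d F (d - ((j : ℕ) - (i : ℕ))) else 0)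
    else
      (if (i : ℕ) - d ≤ (j : ℕ) ∧ (j : ℕ) ≤ (i : ℕ) then
        binaryCoeff d G (d - ((j : ℕ) - ((i : ℕ) - d))) else 0)

/-- The resultant of two binary forms of degree `d`. -/
noncomputable def binaryResultant {R : Type*} [CommRing R] (d : ℕ)
    (F G : MvPolynomial (Fin 2) R) : R :=
  (sylvesterMatrix d F G).det

private lemma sum_window {M : Type*} [AddCommMonoid M] (N i d : ℕ) (hi : i + d < N) (c : ℕ → M) :
    ∑ j ∈ Finset.range N, (if i ≤ j ∧ j ≤ i + d then c j else 0)
      = ∑ k ∈ Finset.range (d + 1), c (i + k) := by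
  rw [← Finset.sum_filter]
  have hset : (Finset.range N).filter (fun j => i ≤ j ∧ j ≤ i + d) = Finset.Ico i (i + d + 1) := by
    ext j
    simp only [Finset.mem_filter, Finset.mem_range, Finset.mem_Ico]
    omega
  rw [hset, Finset.sum_Ico_eq_sum_range]
  have h : i + d + 1 - i = d + 1 := by omega
  rw [h]

private lemma binary_eval_eq {O : Type*} [CommRing O] {d : ℕ} {F : MvPolynomial (Fin 2) O}
    (hF : F.IsHomogeneous d) (a b : O) :
    MvPolynomial.eval ![a, b] F
      = ∑ k ∈ Finset.range (d + 1), binaryCoeff d F k * a ^ k * b ^ (d - k) := by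
  classical
  rw [MvPolynomial.eval_eq']
  set φ : ℕ → (Fin 2 →₀ ℕ) := fun k => Finsupp.single 0 k + Finsupp.single 1 (d - k) with hφ
  have hφ0 : ∀ k, φ k 0 = k := by intro k; simp [hφ, Finsupp.single_apply]
  have hφ1 : ∀ k, φ k 1 = d - k := by intro k; simp [hφ, Finsupp.single_apply]
  have hsub : F.support ⊆ (Finset.range (d+1)).image φ := by
    intro m hm
    have hc : MvPolynomial.coeff m F ≠ 0 := MvPolynomial.mem_support_iff.mp hm
    have hdeg : m 0 + m 1 = d := by
      have h1 := hF hc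
      rw [show Finsupp.weight (1 : Fin 2 → ℕ) m = m.degree by rw [Finsupp.degree_eq_weight_one]; rfl] at h1
      have h2 : m.degree = ∑ i : Fin 2, m i :=
        Finset.sum_subset (Finset.subset_univ _)
          (fun i _ hi => Finsupp.notMem_support_iff.mp hi)
      rw [h2, Fin.sum_univ_two] at h1
      exact h1
    have hm0 : m = φ (m 0) := by
      ext j
      fin_cases j
      · show m 0 = φ (m 0) 0
        rw [hφ0]
      · show m 1 = φ (m 0) 1
        rw [hφ1]; omega
    exact Finset.mem_image.mpr ⟨m 0, Finset.mem_range.mpr (by omega), hm0.symm⟩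
  rw [Finset.sum_subset hsub (fun m _ hm => by
    rw [MvPolynomial.notMem_support_iff.mp hm, zero_mul])]
  rw [Finset.sum_image (fun x _ y _ h => by
    have := congrArg (fun f : Fin 2 →₀ ℕ => f 0) h
    simpa [hφ0] using this)]
  refine Finset.sum_congr rfl fun k _ => ?_
  rw [Fin.prod_univ_two, hφ0, hφ1]
  show MvPolynomial.coeff (φ k) F * (a ^ k * b ^ (d - k)) = _
  rw [hφ]
  show MvPolynomial.coeff _ F * (a ^ k * b ^ (d - k)) = binaryCoeff d F k * a ^ k * b ^ (d - k)
  rw [binaryCoeff, mul_assoc]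

private lemma eval_dvd_binaryResultant {O : Type*} [CommRing O] [IsDomain O]
    [UniqueFactorizationMonoid O]
    (d : ℕ) (hd : 1 ≤ d) (F G : MvPolynomial (Fin 2) O)
    (hF : F.IsHomogeneous d) (hG : G.IsHomogeneous d)
    (a b : O) (hab : ∀ p : O, p ∣ a → p ∣ b → IsUnit p)
    (hdvd : MvPolynomial.eval ![a, b] G ∣ MvPolynomial.eval ![a, b] F) :
    MvPolynomial.eval ![a, b] G ∣ binaryResultant d F G := by
  classical
  obtain ⟨c, hc⟩ := hdvd
  set g : O := MvPolynomial.eval ![a, b] G with hg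
  set M : Matrix (Fin (2 * d)) (Fin (2 * d)) O := sylvesterMatrix d F G with hM
  set v : Fin (2 * d) → O := fun j => a ^ (2 * d - 1 - (j : ℕ)) * b ^ (j : ℕ) with hv
  set w : Fin (2 * d) → O := fun i =>
    if (i : ℕ) < d then a ^ (d - 1 - (i : ℕ)) * b ^ (i : ℕ) * c
    else a ^ (2 * d - 1 - (i : ℕ)) * b ^ ((i : ℕ) - d) with hw
  have hMv : M.mulVec v = g • w := by
    funext i
    simp only [Matrix.mulVec, dotProduct, hM, sylvesterMatrix, Matrix.of_apply,
      hv, Pi.smul_apply, smul_eq_mul]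
    by_cases hi : (i : ℕ) < d
    · simp only [if_pos hi]
      rw [Fin.sum_univ_eq_sum_range (fun j =>
        (if (i : ℕ) ≤ j ∧ j ≤ (i : ℕ) + d then binaryCoeff d F (d - (j - (i : ℕ))) else 0)
          * (a ^ (2 * d - 1 - j) * b ^ j))]
      simp only [ite_mul, zero_mul]
      rw [sum_window (2 * d) (i : ℕ) d (by omega)
        (fun j => binaryCoeff d F (d - (j - (i : ℕ))) * (a ^ (2 * d - 1 - j) * b ^ j))]
      have hFe : MvPolynomial.eval ![a, b] F
          = ∑ k ∈ Finset.range (d + 1), binaryCoeff d F k * a ^ k * b ^ (d - k) :=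
        binary_eval_eq hF a b
      rw [hw]
      simp only [if_pos hi]
      have : g * (a ^ (d - 1 - (i : ℕ)) * b ^ (i : ℕ) * c)
          = a ^ (d - 1 - (i : ℕ)) * b ^ (i : ℕ) * (g * c) := by ring
      rw [this, ← hc, hFe, Finset.mul_sum, ← Finset.sum_range_reflect]
      refine Finset.sum_congr rfl fun k hk => ?_
      rw [Finset.mem_range] at hk
      have h0 : d + 1 - 1 - k = d - k := by omega
      rw [h0]
      have h2 : (i : ℕ) + (d - k) - (i : ℕ) = d - k := by omega
      have h3 : 2 * d - 1 - ((i : ℕ) + (d - k)) = (d - 1 - (i : ℕ)) + k := by omega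
      have h4 : d - (d - k) = k := by omega
      have h5 : (i : ℕ) + (d - k) = (i : ℕ) + (d - k) := rfl
      rw [h2, h3, h4, pow_add a, pow_add b]
      ring
    · simp only [if_neg hi]
      push_neg at hi
      have hid : (i : ℕ) < 2 * d := i.isLt
      rw [Fin.sum_univ_eq_sum_range (fun j =>
        (if (i : ℕ) - d ≤ j ∧ j ≤ (i : ℕ) then binaryCoeff d G (d - (j - ((i : ℕ) - d))) else 0)
          * (a ^ (2 * d - 1 - j) * b ^ j))]
      simp only [ite_mul, zero_mul]
      have hcond : ∀ j : ℕ, ((i : ℕ) - d ≤ j ∧ j ≤ (i : ℕ))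
          ↔ ((i : ℕ) - d ≤ j ∧ j ≤ ((i : ℕ) - d) + d) := by intro j; omega
      simp only [hcond]
      rw [sum_window (2 * d) ((i : ℕ) - d) d (by omega)
        (fun j => binaryCoeff d G (d - (j - ((i : ℕ) - d))) * (a ^ (2 * d - 1 - j) * b ^ j))]
      have hGe : g = ∑ k ∈ Finset.range (d + 1), binaryCoeff d G k * a ^ k * b ^ (d - k) :=
        binary_eval_eq hG a b
      rw [hw]
      simp only [if_neg (not_lt.mpr hi)]
      have : g * (a ^ (2 * d - 1 - (i : ℕ)) * b ^ ((i : ℕ) - d))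
          = a ^ (2 * d - 1 - (i : ℕ)) * b ^ ((i : ℕ) - d) * g := by ring
      rw [this]
      conv_rhs => rw [hGe]
      rw [Finset.mul_sum, ← Finset.sum_range_reflect]
      refine Finset.sum_congr rfl fun k hk => ?_
      rw [Finset.mem_range] at hk
      have h0 : d + 1 - 1 - k = d - k := by omega
      rw [h0]
      have h2 : (i : ℕ) - d + (d - k) - ((i : ℕ) - d) = d - k := by omega
      have h3 : 2 * d - 1 - ((i : ℕ) - d + (d - k)) = (2 * d - 1 - (i : ℕ)) + k := by omega
      have h4 : d - (d - k) = k := by omega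
      rw [h2, h3, h4, pow_add a, pow_add b]
      ring
  -- linear algebra step
  have hkey : (binaryResultant d F G) • v = g • (M.adjugate.mulVec w) := by
    have h1 : (binaryResultant d F G) • v = (M.adjugate * M).mulVec v := by
      rw [Matrix.adjugate_mul, Matrix.smul_mulVec, Matrix.one_mulVec]
      rfl
    rw [h1, ← Matrix.mulVec_mulVec, hMv, Matrix.mulVec_smul]
  have hn : 0 < 2 * d := by omega
  have hA : g ∣ binaryResultant d F G * a ^ (2 * d - 1) := by
    have := congrFun hkey ⟨0, hn⟩
    simp only [Pi.smul_apply, smul_eq_mul, hv] at this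
    refine ⟨M.adjugate.mulVec w ⟨0, hn⟩, ?_⟩
    rw [← this]
    norm_num
  have hB : g ∣ binaryResultant d F G * b ^ (2 * d - 1) := by
    have := congrFun hkey ⟨2 * d - 1, by omega⟩
    simp only [Pi.smul_apply, smul_eq_mul, hv] at this
    refine ⟨M.adjugate.mulVec w ⟨2 * d - 1, by omega⟩, ?_⟩
    rw [← this]
    have : 2 * d - 1 - (2 * d - 1) = 0 := by omega
    rw [this]
    norm_num
  -- UFD / gcd argument
  letI : StrongNormalizationMonoid O := UniqueFactorizationMonoid.strongNormalizationMonoid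
  letI : GCDMonoid O := UniqueFactorizationMonoid.toGCDMonoid O
  have hrel : IsRelPrime (a ^ (2 * d - 1)) (b ^ (2 * d - 1)) := IsRelPrime.pow hab
  have hu : IsUnit (gcd (a ^ (2 * d - 1)) (b ^ (2 * d - 1))) :=
    hrel (gcd_dvd_left _ _) (gcd_dvd_right _ _)
  have h1 : g ∣ gcd (binaryResultant d F G * a ^ (2 * d - 1))
      (binaryResultant d F G * b ^ (2 * d - 1)) := dvd_gcd hA hB
  have h2 := (gcd_mul_left' (binaryResultant d F G) (a ^ (2 * d - 1)) (b ^ (2 * d - 1))).dvd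
  exact (h1.trans h2).trans ((hu.mul_right_dvd).mpr dvd_rfl)



/-- Let `K` be a number field, `S` a finite set of finite places, and suppose the
ring `O_{K,S}` of `S`-integers is a UFD.  Let `f = [F, G] : ℙ¹ → ℙ¹` be given by
coprime homogeneous polynomials `F, G ∈ O_{K,S}[x,y]` of degree `d ≥ 1` with
resultant `R = Res(F,G) ≠ 0`.  If `α = a/b` with `a, b ∈ O_{K,S}` coprime and
`f(α) ∈ O_{K,S}`, then `G(a,b)` divides `R` in `O_{K,S}`. -/
theorem denominator_eval_dvd_resultant
    (K : Type*) [Field K] [NumberField K]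
    (S : Set (HeightOneSpectrum (𝓞 K))) (hS : S.Finite)
    [UniqueFactorizationMonoid ↥(S.integer K)]
    (d : ℕ) (hd : 1 ≤ d)
    (F G : MvPolynomial (Fin 2) ↥(S.integer K))
    (hF : F.IsHomogeneous d) (hG : G.IsHomogeneous d)
    (hFG : ∀ p : MvPolynomial (Fin 2) ↥(S.integer K), p ∣ F → p ∣ G → IsUnit p)
    (hR : binaryResultant d F G ≠ 0)
    (a b : ↥(S.integer K))
    (hb : b ≠ 0)
    (hab : ∀ p : ↥(S.integer K), p ∣ a → p ∣ b → IsUnit p)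
    (hGab : MvPolynomial.eval ![a, b] G ≠ 0)
    (hint : ((MvPolynomial.eval ![a, b] F : ↥(S.integer K)) : K) /
        ((MvPolynomial.eval ![a, b] G : ↥(S.integer K)) : K) ∈ S.integer K) :
    MvPolynomial.eval ![a, b] G ∣ binaryResultant d F G := by
  have hG0 : ((MvPolynomial.eval ![a, b] G : ↥(S.integer K)) : K) ≠ 0 := by
    simpa using hGab
  have hdvd : MvPolynomial.eval ![a, b] G ∣ MvPolynomial.eval ![a, b] F := by
    refine ⟨⟨_, hint⟩, ?_⟩
    apply Subtype.ext
    push_cast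
    field_simp
  exact eval_dvd_binaryResultant d hd F G hF hG a b hab hdvd
end

section
/- For the family φ_{(r,s,t)}(x) = (rs·x³ + s·x + t)/(x² + 1) with r, s, t ∈ ℚ and r·s·t ≠ 0, the second iterate φ²_{(r,s,t)} is not a polynomial in ℚ[x]. -/
open Polynomial

/-- For the family `φ_{(r,s,t)}(x) = (rs·x³ + s·x + t)/(x² + 1)` with
`r, s, t ∈ ℚ` and `r·s·t ≠ 0`, the second iterate `φ²_{(r,s,t)}` is not a
polynomial in `ℚ[x]`: writing `φ² = f/g` with `f = rs·p³ + s·p·q² + t·q³` and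
`g = q·(p² + q²)` where `p = rs·x³ + s·x + t` and `q = x² + 1`, the denominator
`g` does not divide the numerator `f`. -/
theorem second_iterate_not_polynomial (r s t : ℚ) (h : r * s * t ≠ 0)
    (p q : Polynomial ℚ)
    (hp : p = C (r * s) * X ^ 3 + C s * X + C t) (hq : q = X ^ 2 + 1) :
    ¬ (q * (p ^ 2 + q ^ 2) ∣ C (r * s) * p ^ 3 + C s * p * q ^ 2 + C t * q ^ 3) := by
  have ht : t ≠ 0 := by rintro rfl; simp at h
  have hrs : r * s ≠ 0 := by rintro h'; apply h; rw [h']; ring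
  intro hdvd
  have hdegq : q.degree = 2 := by
    rw [hq, ← C_1, degree_X_pow_add_C (by norm_num)]; rfl
  have hndegq : q.natDegree = 2 := natDegree_eq_of_degree_eq_some hdegq
  -- q is irreducible
  have hirr : Irreducible q := by
    rw [irreducible_iff_roots_eq_zero_of_degree_le_three (by omega) (by omega)]
    rw [Multiset.eq_zero_iff_forall_notMem]
    intro a ha
    have hqne : q ≠ 0 := fun h0 => by simp [h0] at hdegq
    rw [mem_roots hqne] at ha
    rw [hq] at ha
    simp only [IsRoot, eval_add, eval_pow, eval_X, eval_one] at ha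
    nlinarith [sq_nonneg a]
  have hprime : Prime q := hirr.prime
  -- q divides the numerator
  have hq1 : q ∣ C (r * s) * p ^ 3 + C s * p * q ^ 2 + C t * q ^ 3 :=
    dvd_trans (dvd_mul_right q _) hdvd
  have hq2 : q ∣ C (r * s) * p ^ 3 := by
    have h2 : q ∣ C s * p * q ^ 2 + C t * q ^ 3 :=
      ⟨C s * p * q + C t * q ^ 2, by ring⟩
    have := dvd_sub hq1 h2
    simpa using this
  -- hence q divides p
  have hqp : q ∣ p := by
    rcases hprime.dvd_mul.mp hq2 with h1 | h1
    · exfalso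
      have hC : (C (r * s) : Polynomial ℚ) ≠ 0 := by simpa using hrs
      have := Polynomial.eq_zero_of_dvd_of_degree_lt h1
        (by rw [degree_C hrs, hdegq]; norm_num)
      exact hC this
    · exact hprime.dvd_of_dvd_pow h1
  -- then q divides a nonzero polynomial of degree ≤ 1, contradiction
  have hlin : q ∣ C (s - r * s) * X + C t := by
    have : C (s - r * s) * X + C t = p - C (r * s) * X * q := by
      rw [hp, hq]; simp only [C_sub, C_mul]; ring
    rw [this]
    exact dvd_sub hqp (Dvd.dvd.mul_left (dvd_refl q) _)
  have hzero := Polynomial.eq_zero_of_dvd_of_degree_lt hlin (by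
    rw [hdegq]
    calc (C (s - r * s) * X + C t).degree ≤ max (C (s - r * s) * X).degree (C t).degree :=
          degree_add_le _ _
      _ < 2 := by
          apply max_lt
          · exact lt_of_le_of_lt (degree_C_mul_X_le _) (by norm_num)
          · exact lt_of_le_of_lt (degree_C_le) (by norm_num)
    )
  have := congrArg (fun f => Polynomial.coeff f 0) hzero
  simp at this
  exact ht this
end
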